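/- A countable family K = (A_i)_{i∈I} of pairwise nonisomorphic structures is E_range-learnable if and only if for all i ≠ j in I there exists s ∈ ℕ such that A_i↾s does not embed into A_j or A_j↾s does not embed into A_i. (This is the paper's characterization of E_range-learnability by Σ^inf_1-partial orders, stated in its equivalent combinatorial form: the Σ^inf_1-theories of A_i and A_j differ exactly when some finite restriction of one fails to embed into the other.) -/

import Mathlib

/-- A structure on domain ℕ: a binary relation given as a map to `Bool`. -/
abbrev Struc := ℕ → ℕ → Bool

/-- The restrictions of `R` and `R'` to `{0,…,s} × {0,…,s}` agree. -/
def restrEq (R R' : Struc) (s : ℕ) : Prop :=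
  ∀ x ≤ s, ∀ y ≤ s, R x y = R' x y

/-- `R` and `R'` are isomorphic structures. -/
def Isom (R R' : Struc) : Prop :=
  ∃ e : ℕ ≃ ℕ, ∀ x y, R' (e x) (e y) = R x y

/-- `R↾s` embeds into `R'`: there is a map injective on `{0,…,s}` preserving the relation. -/
def EmbedsRestr (R : Struc) (s : ℕ) (R' : Struc) : Prop :=
  ∃ h : ℕ → ℕ, (∀ x ≤ s, ∀ y ≤ s, h x = h y → x = y) ∧
    (∀ x ≤ s, ∀ y ≤ s, R' (h x) (h y) = R x y)

/-- The learning domain of a family: all isomorphic copies of members of the family. -/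
def LD {I : Type} (A : I → Struc) : Set Struc := {R | ∃ i, Isom R (A i)}

/-- A learner: its conjecture at stage `s` depends only on `R↾s`. -/
def IsLearner {I : Type} (M : Struc → ℕ → Option I) : Prop :=
  ∀ R R' s, restrEq R R' s → M R s = M R' s

/-- `M` Ex-learns the family `A`. -/
def ExLearns {I : Type} (A : I → Struc) (M : Struc → ℕ → Option I) : Prop :=
  ∀ R i, Isom R (A i) → ∃ s₀, ∀ s ≥ s₀, M R s = some i

/-- `M` Fin-learns the family `A`. -/
def FinLearns {I : Type} (A : I → Struc) (M : Struc → ℕ → Option I) : Prop :=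
  ∀ R i, Isom R (A i) →
    ∃ s₀, (∀ s < s₀, M R s = none) ∧ (∀ s ≥ s₀, M R s = some i)

/-- `M` co-learns the family `A`. -/
def CoLearns {I : Type} (A : I → Struc) (M : Struc → ℕ → Option I) : Prop :=
  ∀ R i, Isom R (A i) → ∀ j, (∃ s, M R s = some j) ↔ j ≠ i

/-- `M` nUs-learns the family `A`: it Ex-learns it and never abandons the correct conjecture. -/
def NUsLearns {I : Type} (A : I → Struc) (M : Struc → ℕ → Option I) : Prop :=
  ExLearns A M ∧
    ∀ R i, Isom R (A i) → ∀ s, M R s = some i → ∀ t ≥ s, M R t = some i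

/-- `M` Dec-learns the family `A`: it Ex-learns it and never repeats an abandoned conjecture. -/
def DecLearns {I : Type} (A : I → Struc) (M : Struc → ℕ → Option I) : Prop :=
  ExLearns A M ∧
    ∀ R ∈ LD A, ∀ (j : I) (s : ℕ), M R s = some j → M R (s + 1) ≠ some j →
      ∀ t > s, M R t ≠ some j

/-- `M` PL-learns the family `A`: the unique conjecture output infinitely often is correct. -/
def PLLearns {I : Type} (A : I → Struc) (M : Struc → ℕ → Option I) : Prop :=
  ∀ R ∈ LD A, ∀ i, {s | M R s = some i}.Infinite ↔ Isom R (A i)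

/-- The relation `E₀` on Baire space: eventual agreement. -/
def E0 (p q : ℕ → ℕ) : Prop := ∃ m, ∀ n ≥ m, p n = q n

/-- The relation `E₃` on `ℕ → (ℕ → ℕ)`: columnwise `E₀`. -/
def E3 (p q : ℕ → ℕ → ℕ) : Prop := ∀ m, E0 (p m) (q m)

/-- The relation `E_range` on Baire space: equality of ranges. -/
def Erange (p q : ℕ → ℕ) : Prop := Set.range p = Set.range q

lemma isom_refl (R : Struc) : Isom R R := ⟨Equiv.refl ℕ, fun _ _ => rfl⟩

lemma isom_symm {R R' : Struc} (h : Isom R R') : Isom R' R := by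
  obtain ⟨e, he⟩ := h
  exact ⟨e.symm, fun x y => by
    have := he (e.symm x) (e.symm y); simp at this; exact this.symm⟩

lemma isom_trans {R R' R'' : Struc} (h : Isom R R') (h' : Isom R' R'') : Isom R R'' := by
  obtain ⟨e, he⟩ := h; obtain ⟨f, hf⟩ := h'
  exact ⟨e.trans f, fun x y => by simp [Equiv.trans_apply, hf, he]⟩

lemma embeds_isom {D R R' : Struc} {s : ℕ} (hE : EmbedsRestr D s R) (hI : Isom R R') :
    EmbedsRestr D s R' := by
  obtain ⟨h, hinj, hval⟩ := hE
  obtain ⟨e, he⟩ := hI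
  refine ⟨fun x => e (h x), fun x hx y hy hxy => hinj x hx y hy (e.injective hxy),
    fun x hx y hy => by rw [he, hval x hx y hy]⟩

lemma embeds_self {R D : Struc} (hI : Isom R D) (s : ℕ) : EmbedsRestr D s R := by
  obtain ⟨e, he⟩ := hI
  refine ⟨fun x => e.symm x, fun x _ y _ hxy => by simpa using congrArg e hxy,
    fun x _ y _ => ?_⟩
  have := he (e.symm x) (e.symm y)
  simp at this
  exact this.symm

lemma exists_perm_extend (s : ℕ) (h : ℕ → ℕ)
    (hinj : ∀ x ≤ s, ∀ y ≤ s, h x = h y → x = y) :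
    ∃ π : ℕ ≃ ℕ, ∀ x ≤ s, π x = h x := by
  classical
  set S : Set ℕ := Set.Iic s with hS
  set T : Set ℕ := h '' S with hT
  have hSfin : S.Finite := Set.finite_Iic s
  have hTfin : T.Finite := hSfin.image h
  have hbij : Function.Bijective (fun x : S => (⟨h x, ⟨x, x.2, rfl⟩⟩ : T)) := by
    constructor
    · intro a b hab
      exact Subtype.ext (hinj a a.2 b b.2 (congrArg Subtype.val hab))
    · rintro ⟨y, x, hx, rfl⟩
      exact ⟨⟨x, hx⟩, rfl⟩
  let e1 : S ≃ T := Equiv.ofBijective _ hbij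
  haveI : Infinite (↥Sᶜ) := Set.infinite_coe_iff.2 hSfin.infinite_compl
  haveI : Infinite (↥Tᶜ) := Set.infinite_coe_iff.2 hTfin.infinite_compl
  haveI : Denumerable (↥Sᶜ) := Nat.Subtype.denumerable _
  haveI : Denumerable (↥Tᶜ) := Nat.Subtype.denumerable _
  let e2 : (↥Sᶜ) ≃ (↥Tᶜ) := Denumerable.equiv₂ _ _
  refine ⟨(Equiv.Set.sumCompl S).symm.trans ((e1.sumCongr e2).trans (Equiv.Set.sumCompl T)),
    fun x hx => ?_⟩
  have hxS : x ∈ S := hx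
  simp only [Equiv.trans_apply, Equiv.Set.sumCompl_symm_apply_of_mem hxS,
    Equiv.sumCongr_apply, Sum.map_inl, Equiv.Set.sumCompl_apply_inl]
  rfl

lemma isOpen_restrEq (R₀ : Struc) (t : ℕ) : IsOpen {R : Struc | restrEq R₀ R t} := by
  have : {R : Struc | restrEq R₀ R t} =
      ⋂ x ∈ Finset.range (t+1), ⋂ y ∈ Finset.range (t+1),
        ((fun R : Struc => R x y) ⁻¹' {b | b = R₀ x y}) := by
    ext R
    simp only [Set.mem_setOf_eq, restrEq, Set.mem_iInter, Finset.mem_range, Nat.lt_succ_iff,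
      Set.mem_preimage]
    constructor
    · intro hr x hx y hy; exact (hr x hx y hy).symm
    · intro hr x hx y hy; exact (hr x hx y hy).symm
  rw [this]
  refine isOpen_biInter_finset fun x _ => isOpen_biInter_finset fun y _ => ?_
  exact (isOpen_discrete _).preimage ((continuous_apply y).comp (continuous_apply x))

lemma continuous_of_local (g : Struc → ℕ) (t : ℕ)
    (hg : ∀ R R', restrEq R R' t → g R = g R') : Continuous g := by
  rw [continuous_discrete_rng]
  intro b
  have : g ⁻¹' {b} = ⋃ R₀ ∈ g ⁻¹' {b}, {R | restrEq R₀ R t} := by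
    ext R
    simp only [Set.mem_preimage, Set.mem_singleton_iff, Set.mem_iUnion]
    constructor
    · intro hR; exact ⟨R, hR, fun x hx y hy => rfl⟩
    · rintro ⟨R₀, hR₀, hrest⟩
      rw [← hg R₀ R hrest]; exact hR₀
  rw [this]
  exact isOpen_biUnion fun R₀ _ => isOpen_restrEq R₀ t

lemma restrEq_symm {R R' : Struc} {t : ℕ} (h : restrEq R R' t) : restrEq R' R t :=
  fun x hx y hy => (h x hx y hy).symm

lemma range_subset_of_embeds {I : Type} (A : I → Struc) (Γ : Struc → ℕ → ℕ)
    (hc : ContinuousOn Γ (LD A))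
    (hiff : ∀ R ∈ LD A, ∀ R' ∈ LD A, (Isom R R' ↔ Erange (Γ R) (Γ R')))
    (i j : I) (hemb : ∀ s, EmbedsRestr (A i) s (A j)) :
    Set.range (Γ (A i)) ⊆ Set.range (Γ (A j)) := by
  classical
  have hex : ∀ s : ℕ, ∃ R : Struc, Isom R (A j) ∧ restrEq (A i) R s := by
    intro s
    obtain ⟨h, hinj, hval⟩ := hemb s
    obtain ⟨π, hπ⟩ := exists_perm_extend s h hinj
    refine ⟨fun x y => A j (π x) (π y), ⟨π, fun x y => rfl⟩, fun x hx y hy => ?_⟩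
    show A i x y = A j (π x) (π y)
    rw [hπ x hx, hπ y hy]
    exact (hval x hx y hy).symm
  choose Rs hRsIsom hRsEq using hex
  have hmem : ∀ s, Rs s ∈ LD A := fun s => ⟨j, hRsIsom s⟩
  have htt : Filter.Tendsto Rs Filter.atTop (nhdsWithin (A i) (LD A)) := by
    rw [tendsto_nhdsWithin_iff]
    refine ⟨?_, Filter.Eventually.of_forall hmem⟩
    rw [tendsto_pi_nhds]
    intro x
    rw [tendsto_pi_nhds]
    intro y
    apply tendsto_nhds_of_eventually_eq
    filter_upwards [Filter.eventually_ge_atTop (max x y)] with s hs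
    exact (hRsEq s x (le_trans (le_max_left x y) hs) y (le_trans (le_max_right x y) hs)).symm
  have hΓt : Filter.Tendsto (fun s => Γ (Rs s)) Filter.atTop (nhds (Γ (A i))) :=
    Filter.Tendsto.comp (hc (A i) ⟨i, isom_refl _⟩) htt
  rintro v ⟨n, rfl⟩
  have hco : Filter.Tendsto (fun s => Γ (Rs s) n) Filter.atTop (nhds (Γ (A i) n)) :=
    tendsto_pi_nhds.mp hΓt n
  rw [nhds_discrete] at hco
  obtain ⟨s, hs⟩ := (Filter.tendsto_pure.mp hco).exists
  have hrange : Set.range (Γ (Rs s)) = Set.range (Γ (A j)) :=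
    (hiff (Rs s) (hmem s) (A j) ⟨j, isom_refl _⟩).mp (hRsIsom s)
  rw [← hs, ← hrange]
  exact Set.mem_range_self n

/-- A countable family of pairwise nonisomorphic structures is `E_range`-learnable iff for
all `i ≠ j` some finite restriction of one of `A i`, `A j` fails to embed into the other. -/
theorem erangeLearnable_iff_partialOrder {I : Type} [Countable I] (A : I → Struc)
    (hA : ∀ i j, i ≠ j → ¬ Isom (A i) (A j)) :
    (∃ Γ : Struc → (ℕ → ℕ), ContinuousOn Γ (LD A) ∧
        ∀ R ∈ LD A, ∀ R' ∈ LD A, (Isom R R' ↔ Erange (Γ R) (Γ R'))) ↔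
      ∀ i j, i ≠ j →
        ∃ s, ¬ EmbedsRestr (A i) s (A j) ∨ ¬ EmbedsRestr (A j) s (A i) := by

  classical
  constructor
  · rintro ⟨Γ, hc, hiff⟩ i j hij
    by_contra hnone
    push_neg at hnone
    have h1 := range_subset_of_embeds A Γ hc hiff i j (fun s => (hnone s).1)
    have h2 := range_subset_of_embeds A Γ hc hiff j i (fun s => (hnone s).2)
    have hIso : Isom (A i) (A j) :=
      (hiff (A i) ⟨i, isom_refl _⟩ (A j) ⟨j, isom_refl _⟩).mpr (Set.Subset.antisymm h1 h2)
    exact hA i j hij hIso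
  · intro hsep
    obtain ⟨f, hf⟩ := exists_injective_nat I
    set C : Struc → ℕ → ℕ → ℕ → Prop := fun R k s t =>
      ∃ i, f i = k ∧ ∃ h : ℕ → ℕ, (∀ x ≤ s, h x ≤ t) ∧
        (∀ x ≤ s, ∀ y ≤ s, h x = h y → x = y) ∧
        (∀ x ≤ s, ∀ y ≤ s, R (h x) (h y) = A i x y) with hCdef
    set Γ : Struc → ℕ → ℕ := fun R n =>
      Nat.casesOn n 0 (fun m =>
        if C R m.unpair.1.unpair.1 m.unpair.1.unpair.2 m.unpair.2 then m.unpair.1 + 1 else 0)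
      with hΓdef
    have hG0 : ∀ R, Γ R 0 = 0 := fun _ => rfl
    have hGs : ∀ R m, Γ R (m + 1) =
        if C R m.unpair.1.unpair.1 m.unpair.1.unpair.2 m.unpair.2 then m.unpair.1 + 1 else 0 :=
      fun _ _ => rfl
    -- transfer of C under restriction equality
    have hCres : ∀ R R' k s t, restrEq R R' t → C R k s t → C R' k s t := by
      intro R R' k s t hre hC
      obtain ⟨i, hfi, h, hbd, hinj, hval⟩ := hC
      refine ⟨i, hfi, h, hbd, hinj, fun x hx y hy => ?_⟩
      rw [← hre (h x) (hbd x hx) (h y) (hbd y hy)]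
      exact hval x hx y hy
    -- membership characterization
    have hmr : ∀ (R : Struc) (k s : ℕ),
        (Nat.pair k s + 1 ∈ Set.range (Γ R)) ↔ ∃ i, f i = k ∧ EmbedsRestr (A i) s R := by
      intro R k s
      constructor
      · rintro ⟨n, hn⟩
        cases n with
        | zero => rw [hG0] at hn; omega
        | succ m =>
          rw [hGs] at hn
          by_cases hcond : C R m.unpair.1.unpair.1 m.unpair.1.unpair.2 m.unpair.2
          · rw [if_pos hcond] at hn
            have hps : m.unpair.1 = Nat.pair k s := by omega
            rw [hps] at hcond
            rw [Nat.unpair_pair] at hcond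
            obtain ⟨i, hfi, h, _, hinj, hval⟩ := hcond
            exact ⟨i, hfi, h, hinj, hval⟩
          · rw [if_neg hcond] at hn; omega
      · rintro ⟨i, hfi, h, hinj, hval⟩
        set t := (Finset.range (s + 1)).sup h with ht
        have hbd : ∀ x ≤ s, h x ≤ t :=
          fun x hx => Finset.le_sup (Finset.mem_range.mpr (Nat.lt_succ_of_le hx))
        refine ⟨Nat.pair (Nat.pair k s) t + 1, ?_⟩
        rw [hGs]
        rw [Nat.unpair_pair, Nat.unpair_pair]
        rw [if_pos ⟨i, hfi, h, hbd, hinj, hval⟩]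
    -- continuity
    have hcont : Continuous Γ := by
      apply continuous_pi
      intro n
      cases n with
      | zero => exact continuous_const
      | succ m =>
        apply continuous_of_local _ m.unpair.2
        intro R R' hre
        rw [hGs, hGs]
        exact if_congr ⟨hCres R R' _ _ _ hre, hCres R' R _ _ _ (restrEq_symm hre)⟩ rfl rfl
    -- one-sided range inclusion from isomorphism
    have hsub : ∀ R R', Isom R R' → Set.range (Γ R) ⊆ Set.range (Γ R') := by
      intro R R' hIso
      rintro v ⟨n, rfl⟩
      cases n with
      | zero => exact ⟨0, rfl⟩
      | succ m =>
        rw [hGs]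
        by_cases hcond : C R m.unpair.1.unpair.1 m.unpair.1.unpair.2 m.unpair.2
        · rw [if_pos hcond]
          obtain ⟨i, hfi, h, _, hinj, hval⟩ := hcond
          have : Nat.pair m.unpair.1.unpair.1 m.unpair.1.unpair.2 + 1 ∈ Set.range (Γ R') :=
            (hmr R' _ _).mpr ⟨i, hfi, embeds_isom ⟨h, hinj, hval⟩ hIso⟩
          rwa [Nat.pair_unpair] at this
        · rw [if_neg hcond]
          exact ⟨0, rfl⟩
    refine ⟨Γ, hcont.continuousOn, ?_⟩
    rintro R ⟨i, hRi⟩ R' ⟨j, hR'j⟩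
    constructor
    · intro hIso
      exact Set.Subset.antisymm (hsub R R' hIso) (hsub R' R (isom_symm hIso))
    · intro hER
      have hER' : Set.range (Γ R) = Set.range (Γ R') := hER
      have hij : i = j := by
        by_contra hij
        obtain ⟨s, hor⟩ := hsep i j hij
        have e1 : EmbedsRestr (A i) s (A j) := by
          have hm : Nat.pair (f i) s + 1 ∈ Set.range (Γ R) :=
            (hmr R _ _).mpr ⟨i, rfl, embeds_self hRi s⟩
          rw [hER'] at hm
          obtain ⟨i', hfi', hemb⟩ := (hmr R' _ _).mp hm
          have : i' = i := hf hfi'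
          rw [this] at hemb
          exact embeds_isom hemb hR'j
        have e2 : EmbedsRestr (A j) s (A i) := by
          have hm : Nat.pair (f j) s + 1 ∈ Set.range (Γ R') :=
            (hmr R' _ _).mpr ⟨j, rfl, embeds_self hR'j s⟩
          rw [← hER'] at hm
          obtain ⟨j', hfj', hemb⟩ := (hmr R _ _).mp hm
          have : j' = j := hf hfj'
          rw [this] at hemb
          exact embeds_isom hemb hRi
        rcases hor with h | h
        · exact h e1
        · exact h e2
      rw [← hij] at hR'j
      exact isom_trans hRi (isom_symm hR'j)
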